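/- Let A be a partially ordered set and L an algebraic lattice. Then every monotone function f : A → L is the least upper bound, in the pointwise order on monotone functions from A to L, of the set of all step functions a ↘ c (with a ∈ A and c a compact element of L) that lie below f. -/

import Mathlib

/-- An element `c` of a complete lattice is *compact* if whenever `c ≤ sSup S`
there is a finite subset `S' ⊆ S` with `c ≤ sSup S'`. -/
def IsCpt {L : Type*} [CompleteLattice L] (c : L) : Prop :=
  ∀ S : Set L, c ≤ sSup S → ∃ S' ⊆ S, S'.Finite ∧ c ≤ sSup S'

/-- A complete lattice is *algebraic* if every element is the least upper bound of
some set of compact elements. -/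
def IsAlgebraicLattice (L : Type*) [CompleteLattice L] : Prop :=
  ∀ x : L, ∃ B : Set L, (∀ b ∈ B, IsCpt b) ∧ x = sSup B

open Classical in
/-- The step function `a ↘ c : A → L`, sending `x` to `c` if `a ≤ x` and to `⊥` otherwise.
It is monotone, hence an element of the complete lattice `A →o L`. -/
noncomputable def step {A L : Type*} [PartialOrder A] [CompleteLattice L] (a : A) (c : L) :
    A →o L :=
  ⟨fun x => if a ≤ x then c else ⊥, by
    intro x y hxy
    dsimp only
    split_ifs with h1 h2
    · exact le_refl c
    · exact absurd (h1.trans hxy) h2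
    · exact bot_le
    · exact le_rfl⟩


/-- For a poset `A` and an algebraic lattice `L`, every monotone `f : A → L` is
the least upper bound, in the pointwise order, of the set of step functions `a ↘ c`
(with `c` compact) lying below `f`. -/
theorem isLUB_steps_below {A L : Type*} [PartialOrder A] [CompleteLattice L]
    (halg : IsAlgebraicLattice L) (f : A →o L) :
    IsLUB {g : A →o L | (∃ (a : A) (c : L), IsCpt c ∧ g = step a c) ∧ g ≤ f} f := by
  constructor
  · intro g hg
    exact hg.2
  · intro h hub
    intro x
    obtain ⟨B, hB, hfx⟩ := halg (f x)
    show f x ≤ h x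
    rw [hfx]
    apply sSup_le
    intro c hc
    have hstep : step x c ≤ f := by
      intro y
      by_cases hxy : x ≤ y
      · calc step x c y = c := by exact if_pos hxy
          _ ≤ f x := hfx ▸ le_sSup hc
          _ ≤ f y := f.monotone hxy
      · simp [show step x c y = ⊥ from if_neg hxy]
    have := hub ⟨⟨x, c, hB c hc, rfl⟩, hstep⟩ x
    simpa [show step x c x = c from if_pos le_rfl] using this
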